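/- Fix h ∈ {2, …, H}, α ∈ (0, 1), and η > 0 in a finite low-rank MDP of dimension d satisfying the normalization assumptions. Let P be a finitely supported probability distribution over policies of the original MDP (viewed in the extended MDP as never taking the terminal action) that is an (α, η)-randomized policy cover relative to the truncated class Π̄_η for layer h in the extended MDP: E_{π∼P}[d̄^π(x)] ≥ α · max_{π'∈Π̄_η} d̄^{π'}(x) for every x ∈ X_h with max_{π'∈Π̄_η} d̄^{π'}(x) ≥ η·‖μ̄*_h(x)‖₂. Then P is an (α/2, ε)-randomized policy cover for layer h in the original MDP with ε := 4·H·d^{3/2}·η: E_{π∼P}[d^π(x)] ≥ (α/2) · max_{π'∈Π} d^{π'}(x) for every x ∈ X_h with max_{π'∈Π} d^{π'}(x) ≥ ε·‖μ*_h(x)‖₂. -/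

import Mathlib

open scoped BigOperators RealInnerProductSpace

universe u v

variable {X : ℕ → Type u} {A : Type v} [∀ k, Fintype (X k)] [Fintype A] [DecidableEq A]

noncomputable def occ (ρ : X 0 → ℝ) (T : ∀ k, X k → A → X (k + 1) → ℝ)
    (π : ∀ k, X k → A → ℝ) : ∀ k, X k → ℝ
  | 0, x => ρ x
  | k + 1, x' => ∑ x : X k, ∑ a : A, occ ρ T π k x * π k x a * T k x a x'

def IsPolicy (π : ∀ k, X k → A → ℝ) : Prop :=
  ∀ (k : ℕ) (x : X k), (∀ a, 0 ≤ π k x a) ∧ (∑ a : A, π k x a = 1)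

def IsInit (ρ : X 0 → ℝ) : Prop :=
  (∀ x, 0 ≤ ρ x) ∧ (∑ x : X 0, ρ x = 1)

/-- Transition kernel of the extended MDP `M̄`: states `X k ⊕ Unit` (with `Sum.inr ()` the
terminal state `t_{k+1}`), actions `A ⊕ Unit` (with `Sum.inr ()` the terminal action `𝔞`).
The terminal action from any state, and any action from a terminal state, lead
deterministically to the next terminal state; all other transitions are as in `T`. -/
noncomputable def Tb (T : ∀ k, X k → A → X (k + 1) → ℝ) :
    ∀ k, (X k ⊕ Unit) → (A ⊕ Unit) → (X (k + 1) ⊕ Unit) → ℝ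
  | k, Sum.inl x, Sum.inl a, Sum.inl x' => T k x a x'
  | _, Sum.inl _, Sum.inl _, Sum.inr _ => 0
  | _, Sum.inl _, Sum.inr _, Sum.inl _ => 0
  | _, Sum.inl _, Sum.inr _, Sum.inr _ => 1
  | _, Sum.inr _, _, Sum.inl _ => 0
  | _, Sum.inr _, _, Sum.inr _ => 1

/-- Initial distribution of the extended MDP (terminal states have zero mass). -/
def ρb (ρ : X 0 → ℝ) : (X 0 ⊕ Unit) → ℝ := Sum.elim ρ fun _ => 0

/-- A Markov policy of the extended MDP; by convention it takes the terminal action at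
terminal states. -/
def IsExtPolicy (π : ∀ k, (X k ⊕ Unit) → (A ⊕ Unit) → ℝ) : Prop :=
  (∀ (k : ℕ) (x : X k ⊕ Unit), (∀ a, 0 ≤ π k x a) ∧ (∑ a, π k x a = 1)) ∧
  (∀ k : ℕ, π k (Sum.inr ()) (Sum.inr ()) = 1)

/-- Occupancy measure `d̄^π` in the extended MDP. -/
noncomputable def occb (ρ : X 0 → ℝ) (T : ∀ k, X k → A → X (k + 1) → ℝ)
    (π : ∀ k, (X k ⊕ Unit) → (A ⊕ Unit) → ℝ) (k : ℕ) (x : X k ⊕ Unit) : ℝ :=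
  occ (X := fun k => X k ⊕ Unit) (A := A ⊕ Unit) (ρb ρ) (Tb T) π k x

/-- Extended feature map `μ̄` in `ℝ^{d+1}`: `μ̄(x) = (μ(x), 0)` for original states and
`μ̄(t) = e_{d+1}` for terminal states. -/
noncomputable def muExt (d : ℕ) (μ : ∀ k, X k → EuclideanSpace ℝ (Fin d)) (k : ℕ) :
    (X k ⊕ Unit) → EuclideanSpace ℝ (Fin (d + 1))
  | Sum.inl x => WithLp.toLp 2 (fun i : Fin (d + 1) => if hi : (i : ℕ) < d then μ k x ⟨i, hi⟩ else 0)
  | Sum.inr _ => WithLp.toLp 2 (fun i : Fin (d + 1) => if (i : ℕ) = d then 1 else 0)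

/-- The `η`-reachable states at (0-indexed) layer `k` relative to a set `P` of extended
policies; by convention every state of layer `0` is reachable. -/
noncomputable def reachSet (d : ℕ) (ρ : X 0 → ℝ) (T : ∀ k, X k → A → X (k + 1) → ℝ)
    (μ : ∀ k, X k → EuclideanSpace ℝ (Fin d)) (η : ℝ)
    (P : Set (∀ k, (X k ⊕ Unit) → (A ⊕ Unit) → ℝ)) : ∀ k : ℕ, Set (X k)
  | 0 => Set.univ
  | k + 1 => {x | η * ‖muExt d μ (k + 1) (Sum.inl x)‖ ≤
      ⨆ π : P, occb ρ T π.1 (k + 1) (Sum.inl x)}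

/-- The truncated policy classes `Π̄_{n,η}`: `trunc … n` is the paper's `Π̄_{n,η}`, where the
truncation at stage `n + 1` replaces the action by the terminal action at every
(0-indexed) layer-`n` state that is not `η`-reachable relative to `Π̄_{n,η}`, leaving the
policy unchanged everywhere else.  `Π̄_η = trunc … H`. -/
noncomputable def trunc (d : ℕ) (ρ : X 0 → ℝ) (T : ∀ k, X k → A → X (k + 1) → ℝ)
    (μ : ∀ k, X k → EuclideanSpace ℝ (Fin d)) (η : ℝ) :
    ℕ → Set (∀ k, (X k ⊕ Unit) → (A ⊕ Unit) → ℝ)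
  | 0 => {π | IsExtPolicy π}
  | n + 1 => {π | ∃ π' ∈ trunc d ρ T μ η n,
      (∀ m, m ≠ n → π m = π' m) ∧
      (∀ x : X n, x ∈ reachSet d ρ T μ η (trunc d ρ T μ η n) n →
        π n (Sum.inl x) = π' n (Sum.inl x)) ∧
      (∀ x : X n, x ∉ reachSet d ρ T μ η (trunc d ρ T μ η n) n →
        ∀ a, π n (Sum.inl x) a = if a = Sum.inr () then 1 else 0) ∧
      π n (Sum.inr ()) = π' n (Sum.inr ())}

/-- A policy of the original MDP viewed as a policy of the extended MDP (it never takes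
the terminal action at original states). -/
def embed (π : ∀ k, X k → A → ℝ) : ∀ k, (X k ⊕ Unit) → (A ⊕ Unit) → ℝ
  | k, Sum.inl x, Sum.inl a => π k x a
  | _, Sum.inl _, Sum.inr _ => 0
  | _, Sum.inr _, Sum.inl _ => 0
  | _, Sum.inr _, Sum.inr _ => 1

set_option linter.unusedSectionVars false
set_option linter.unnecessarySeqFocus false

section Aux

variable (ρ : X 0 → ℝ) (T : ∀ k, X k → A → X (k + 1) → ℝ)

lemma occb_zero (σ : ∀ k, (X k ⊕ Unit) → (A ⊕ Unit) → ℝ) (x : X 0) :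
    occb ρ T σ 0 (Sum.inl x) = ρ x := rfl

lemma occb_succ (σ : ∀ k, (X k ⊕ Unit) → (A ⊕ Unit) → ℝ) (k : ℕ) (x' : X (k + 1)) :
    occb ρ T σ (k + 1) (Sum.inl x') =
      ∑ x : X k, ∑ a : A,
        occb ρ T σ k (Sum.inl x) * σ k (Sum.inl x) (Sum.inl a) * T k x a x' := by
  show (∑ x : X k ⊕ Unit, ∑ a : A ⊕ Unit,
      occ (ρb ρ) (Tb T) σ k x * σ k x a * Tb T k x a (Sum.inl x')) = _
  rw [Fintype.sum_sum_type]
  have h2 : ∀ u : Unit, (∑ a : A ⊕ Unit,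
      occ (ρb ρ) (Tb T) σ k (Sum.inr u) * σ k (Sum.inr u) a *
        Tb T k (Sum.inr u) a (Sum.inl x')) = 0 := by
    intro u
    apply Finset.sum_eq_zero
    intro a _
    rcases a with a | a <;> simp [Tb]
  rw [Finset.sum_congr rfl (fun u _ => h2 u)]
  simp only [Finset.sum_const_zero, add_zero]
  apply Finset.sum_congr rfl
  intro x _
  rw [Fintype.sum_sum_type]
  have h3 : (∑ a : Unit, occ (ρb ρ) (Tb T) σ k (Sum.inl x) * σ k (Sum.inl x) (Sum.inr a) *
      Tb T k (Sum.inl x) (Sum.inr a) (Sum.inl x')) = 0 := by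
    apply Finset.sum_eq_zero; intro a _; simp [Tb]
  rw [h3, add_zero]
  rfl

lemma embed_occ (π : ∀ k, X k → A → ℝ) (k : ℕ) (x : X k) :
    occ ρ T π k x = occb ρ T (embed π) k (Sum.inl x) := by
  induction k with
  | zero => rfl
  | succ k ih =>
    rw [occb_succ]
    show (∑ x'' : X k, ∑ a : A, occ ρ T π k x'' * π k x'' a * T k x'' a x) = _
    apply Finset.sum_congr rfl
    intro y _
    apply Finset.sum_congr rfl
    intro a _
    rw [ih y]
    rfl

lemma occb_congr_below (σ σ' : ∀ k, (X k ⊕ Unit) → (A ⊕ Unit) → ℝ) (k : ℕ)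
    (hagree : ∀ m, m < k → ∀ (y : X m) (a : A),
      σ m (Sum.inl y) (Sum.inl a) = σ' m (Sum.inl y) (Sum.inl a)) (x : X k) :
    occb ρ T σ k (Sum.inl x) = occb ρ T σ' k (Sum.inl x) := by
  induction k with
  | zero => rfl
  | succ k ih =>
    rw [occb_succ, occb_succ]
    apply Finset.sum_congr rfl
    intro y _
    apply Finset.sum_congr rfl
    intro a _
    rw [ih (fun m hm => hagree m (hm.trans (Nat.lt_succ_self k))) y,
      hagree k (Nat.lt_succ_self k) y a]

lemma occb_nonneg (H : ℕ) (hρ : IsInit ρ)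
    (hT : ∀ k, k + 2 ≤ H → ∀ (x : X k) (a : A),
      (∀ x', 0 ≤ T k x a x') ∧ (∑ x', T k x a x' = 1))
    (σ : ∀ k, (X k ⊕ Unit) → (A ⊕ Unit) → ℝ)
    (hσ : ∀ k x a, 0 ≤ σ k x a) :
    ∀ k, k + 1 ≤ H → ∀ x : X k, 0 ≤ occb ρ T σ k (Sum.inl x) := by
  intro k
  induction k with
  | zero => intro _ x; exact hρ.1 x
  | succ k ih =>
    intro hk x'
    rw [occb_succ]
    apply Finset.sum_nonneg; intro y _
    apply Finset.sum_nonneg; intro a _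
    have hkH : k + 1 ≤ H := by omega
    have hkH2 : k + 2 ≤ H := hk
    exact mul_nonneg (mul_nonneg (ih hkH y) (hσ _ _ _)) ((hT k hkH2 y a).1 x')

lemma sum_actions_le_one (σ : ∀ k, (X k ⊕ Unit) → (A ⊕ Unit) → ℝ)
    (hσ : IsExtPolicy σ) (k : ℕ) (x : X k) :
    ∑ a : A, σ k (Sum.inl x) (Sum.inl a) ≤ 1 := by
  have h1 := (hσ.1 k (Sum.inl x)).2
  have h0 := (hσ.1 k (Sum.inl x)).1
  rw [Fintype.sum_sum_type] at h1
  have : 0 ≤ ∑ a : Unit, σ k (Sum.inl x) (Sum.inr a) :=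
    Finset.sum_nonneg fun a _ => h0 _
  linarith

lemma occb_mass (H : ℕ) (hρ : IsInit ρ)
    (hT : ∀ k, k + 2 ≤ H → ∀ (x : X k) (a : A),
      (∀ x', 0 ≤ T k x a x') ∧ (∑ x', T k x a x' = 1))
    (σ : ∀ k, (X k ⊕ Unit) → (A ⊕ Unit) → ℝ) (hσ : IsExtPolicy σ) :
    ∀ k, k + 1 ≤ H → ∑ x : X k, occb ρ T σ k (Sum.inl x) ≤ 1 := by
  intro k
  induction k with
  | zero => intro _; exact le_of_eq hρ.2
  | succ k ih =>
    intro hk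
    have hkH : k + 1 ≤ H := by omega
    calc ∑ x' : X (k+1), occb ρ T σ (k+1) (Sum.inl x')
        = ∑ y : X k, ∑ a : A, occb ρ T σ k (Sum.inl y) * σ k (Sum.inl y) (Sum.inl a) *
            (∑ x' : X (k+1), T k y a x') := by
          simp only [occb_succ, Finset.mul_sum]
          rw [Finset.sum_comm]
          apply Finset.sum_congr rfl; intro y _
          rw [Finset.sum_comm]
      _ = ∑ y : X k, (occb ρ T σ k (Sum.inl y)) * ∑ a : A, σ k (Sum.inl y) (Sum.inl a) := by
          apply Finset.sum_congr rfl; intro y _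
          rw [Finset.mul_sum]
          apply Finset.sum_congr rfl; intro a _
          rw [(hT k hk y a).2, mul_one]
      _ ≤ ∑ y : X k, occb ρ T σ k (Sum.inl y) * 1 := by
          apply Finset.sum_le_sum; intro y _
          exact mul_le_mul_of_nonneg_left (sum_actions_le_one σ hσ k y)
            (occb_nonneg ρ T H hρ hT σ (fun k x a => (hσ.1 k x).1 a) k hkH y)
      _ ≤ 1 := by simpa using ih hkH

lemma occb_le_one (H : ℕ) (hρ : IsInit ρ)
    (hT : ∀ k, k + 2 ≤ H → ∀ (x : X k) (a : A),
      (∀ x', 0 ≤ T k x a x') ∧ (∑ x', T k x a x' = 1))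
    (σ : ∀ k, (X k ⊕ Unit) → (A ⊕ Unit) → ℝ) (hσ : IsExtPolicy σ)
    (k : ℕ) (hk : k + 1 ≤ H) (x : X k) : occb ρ T σ k (Sum.inl x) ≤ 1 := by
  calc occb ρ T σ k (Sum.inl x) ≤ ∑ y : X k, occb ρ T σ k (Sum.inl y) :=
        Finset.single_le_sum
          (fun y _ => occb_nonneg ρ T H hρ hT σ (fun k x a => (hσ.1 k x).1 a) k hk y)
          (Finset.mem_univ x)
    _ ≤ 1 := occb_mass ρ T H hρ hT σ hσ k hk

lemma embed_isExtPolicy (π : ∀ k, X k → A → ℝ) (hπ : IsPolicy π) :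
    IsExtPolicy (embed π) := by
  constructor
  · intro k x
    constructor
    · intro a
      rcases x with x | x <;> rcases a with a | a <;>
        simp [embed] <;> exact (hπ k x).1 a
    · rcases x with x | x
      · rw [Fintype.sum_sum_type]
        simp [embed, (hπ k x).2]
      · rw [Fintype.sum_sum_type]
        simp [embed]
  · intro k; rfl

lemma norm_muExt_inl (d : ℕ) (μ : ∀ k, X k → EuclideanSpace ℝ (Fin d)) (k : ℕ) (x : X k) :
    ‖muExt d μ k (Sum.inl x)‖ = ‖μ k x‖ := by
  rw [EuclideanSpace.norm_eq, EuclideanSpace.norm_eq]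
  congr 1
  rw [Fin.sum_univ_castSucc]
  have hlast : muExt d μ k (Sum.inl x) (Fin.last d) = 0 := by
    simp [muExt]
  rw [hlast]
  have hmain : ∀ i : Fin d, muExt d μ k (Sum.inl x) i.castSucc = μ k x i := by
    intro i
    show (if hi : ((i.castSucc : Fin (d + 1)) : ℕ) < d then μ k x ⟨_, hi⟩ else 0) = μ k x i
    rw [dif_pos (by simpa using i.isLt)]
    exact congrArg (μ k x) (Fin.ext (by simp))
  rw [Finset.sum_congr rfl (fun i _ => by rw [hmain i])]
  simp

lemma abs_coord_le_norm {d : ℕ} (v : EuclideanSpace ℝ (Fin d)) (i : Fin d) : |v i| ≤ ‖v‖ := by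
  rw [EuclideanSpace.norm_eq]
  have h1 : |v i| = Real.sqrt (‖v i‖ ^ 2) := by
    rw [Real.sqrt_sq_eq_abs]; simp
  rw [h1]
  apply Real.sqrt_le_sqrt
  exact Finset.single_le_sum (f := fun j => ‖v j‖ ^ 2) (fun j _ => sq_nonneg _)
    (Finset.mem_univ i)

lemma norm_le_sum_abs {d : ℕ} (v : EuclideanSpace ℝ (Fin d)) : ‖v‖ ≤ ∑ i, |v i| := by
  rw [EuclideanSpace.norm_eq]
  have h : ∑ i, ‖v i‖ ^ 2 ≤ (∑ i, |v i|) ^ 2 := by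
    have := Finset.sum_sq_le_sq_sum_of_nonneg (f := fun i => |v i|) (s := Finset.univ)
      (fun i _ => abs_nonneg _)
    simpa using this
  calc Real.sqrt (∑ i, ‖v i‖ ^ 2) ≤ Real.sqrt ((∑ i, |v i|) ^ 2) := Real.sqrt_le_sqrt h
    _ = ∑ i, |v i| := Real.sqrt_sq (Finset.sum_nonneg fun i _ => abs_nonneg _)

/-- Normalization of `μ` gives `∑_x ‖μ x‖ ≤ 2 d √d`. -/
lemma sum_norm_mu_le {d m : ℕ} {H : ℕ} (μ : ∀ k, X k → EuclideanSpace ℝ (Fin d))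
    (hm : m + 2 ≤ H)
    (hμn : ∀ k, k + 2 ≤ H → ∀ g : X (k + 1) → ℝ, (∀ x', g x' ∈ Set.Icc (0 : ℝ) 1) →
      ‖∑ x' : X (k + 1), g x' • μ (k + 1) x'‖ ≤ Real.sqrt d) :
    ∑ x : X (m + 1), ‖μ (m + 1) x‖ ≤ 2 * d * Real.sqrt d := by
  classical
  have key : ∀ i : Fin d, ∑ x : X (m + 1), |μ (m + 1) x i| ≤ 2 * Real.sqrt d := by
    intro i
    set gp : X (m + 1) → ℝ := fun x => if 0 ≤ μ (m + 1) x i then 1 else 0 with hgp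
    set gn : X (m + 1) → ℝ := fun x => if 0 ≤ μ (m + 1) x i then 0 else 1 with hgn
    have hgpIcc : ∀ x, gp x ∈ Set.Icc (0:ℝ) 1 := by
      intro x; by_cases h : 0 ≤ μ (m + 1) x i <;> simp [gp, h]
    have hgnIcc : ∀ x, gn x ∈ Set.Icc (0:ℝ) 1 := by
      intro x; by_cases h : 0 ≤ μ (m + 1) x i <;> simp [gn, h]
    have h1 := hμn m hm gp hgpIcc
    have h2 := hμn m hm gn hgnIcc
    have habs : ∀ x : X (m + 1),
        |μ (m + 1) x i| = gp x * μ (m + 1) x i - gn x * μ (m + 1) x i := by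
      intro x
      by_cases h : 0 ≤ μ (m + 1) x i
      · simp [gp, gn, h, abs_of_nonneg h]
      · simp [gp, gn, h, abs_of_neg (lt_of_not_ge h)]
    calc ∑ x, |μ (m + 1) x i|
        = (∑ x, gp x * μ (m + 1) x i) - ∑ x, gn x * μ (m + 1) x i := by
          rw [← Finset.sum_sub_distrib]
          exact Finset.sum_congr rfl fun x _ => habs x
      _ ≤ |(∑ x, gp x • μ (m + 1) x) i| + |(∑ x, gn x • μ (m + 1) x) i| := by
          have hp : (∑ x, gp x • μ (m + 1) x) i = ∑ x, gp x * μ (m + 1) x i := by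
            rw [WithLp.ofLp_sum, Finset.sum_apply]; simp [PiLp.smul_apply, smul_eq_mul]
          have hn : (∑ x, gn x • μ (m + 1) x) i = ∑ x, gn x * μ (m + 1) x i := by
            rw [WithLp.ofLp_sum, Finset.sum_apply]; simp [PiLp.smul_apply, smul_eq_mul]
          rw [hp, hn]
          have := abs_add' ((∑ x, gp x * μ (m + 1) x i) - ∑ x, gn x * μ (m + 1) x i)
          calc (∑ x, gp x * μ (m + 1) x i) - ∑ x, gn x * μ (m + 1) x i
              ≤ |(∑ x, gp x * μ (m + 1) x i) - ∑ x, gn x * μ (m + 1) x i| := le_abs_self _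
            _ ≤ |∑ x, gp x * μ (m + 1) x i| + |∑ x, gn x * μ (m + 1) x i| := abs_sub _ _
      _ ≤ ‖∑ x, gp x • μ (m + 1) x‖ + ‖∑ x, gn x • μ (m + 1) x‖ := by
          exact add_le_add (abs_coord_le_norm _ i) (abs_coord_le_norm _ i)
      _ ≤ Real.sqrt d + Real.sqrt d := add_le_add h1 h2
      _ = 2 * Real.sqrt d := by ring
  calc ∑ x : X (m + 1), ‖μ (m + 1) x‖
      ≤ ∑ x : X (m + 1), ∑ i, |μ (m + 1) x i| :=
        Finset.sum_le_sum fun x _ => norm_le_sum_abs _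
    _ = ∑ i, ∑ x : X (m + 1), |μ (m + 1) x i| := Finset.sum_comm
    _ ≤ ∑ _i : Fin d, 2 * Real.sqrt d := Finset.sum_le_sum fun i _ => key i
    _ = 2 * d * Real.sqrt d := by simp [Finset.sum_const]; ring

variable (d : ℕ) (μ : ∀ k, X k → EuclideanSpace ℝ (Fin d)) (η : ℝ)

open Classical in
/-- One truncation step: replace the action at every non-`η`-reachable layer-`n` state
by the terminal action. -/
noncomputable def truncStep (σ : ∀ k, (X k ⊕ Unit) → (A ⊕ Unit) → ℝ) (n : ℕ) :
    ∀ k, (X k ⊕ Unit) → (A ⊕ Unit) → ℝ :=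
  Function.update σ n (fun s a => match s with
    | Sum.inl x => if x ∈ reachSet d ρ T μ η (trunc d ρ T μ η n) n then σ n (Sum.inl x) a
        else if a = Sum.inr () then 1 else 0
    | Sum.inr u => σ n (Sum.inr u) a)

lemma truncStep_apply_ne (σ : ∀ k, (X k ⊕ Unit) → (A ⊕ Unit) → ℝ) (n m : ℕ) (h : m ≠ n) :
    truncStep ρ T d μ η σ n m = σ m := Function.update_of_ne h _ _

open Classical in
lemma truncStep_apply_inl (σ : ∀ k, (X k ⊕ Unit) → (A ⊕ Unit) → ℝ) (n : ℕ) (x : X n)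
    (a : A ⊕ Unit) :
    truncStep ρ T d μ η σ n n (Sum.inl x) a =
      if x ∈ reachSet d ρ T μ η (trunc d ρ T μ η n) n then σ n (Sum.inl x) a
      else if a = Sum.inr () then 1 else 0 := by
  unfold truncStep
  rw [Function.update_self]

lemma truncStep_apply_inr (σ : ∀ k, (X k ⊕ Unit) → (A ⊕ Unit) → ℝ) (n : ℕ) (u : Unit)
    (a : A ⊕ Unit) :
    truncStep ρ T d μ η σ n n (Sum.inr u) a = σ n (Sum.inr u) a := by
  unfold truncStep
  rw [Function.update_self]

lemma isExtPolicy_truncStep (σ : ∀ k, (X k ⊕ Unit) → (A ⊕ Unit) → ℝ) (n : ℕ)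
    (hσ : IsExtPolicy σ) : IsExtPolicy (truncStep ρ T d μ η σ n) := by
  classical
  constructor
  · intro k s
    by_cases hk : k = n
    · subst hk
      rcases s with x | u
      · by_cases hx : x ∈ reachSet d ρ T μ η (trunc d ρ T μ η k) k
        · constructor
          · intro a; rw [truncStep_apply_inl, if_pos hx]; exact (hσ.1 k (Sum.inl x)).1 a
          · rw [Finset.sum_congr rfl
              (fun a _ => by rw [truncStep_apply_inl, if_pos hx])]
            exact (hσ.1 k (Sum.inl x)).2
        · constructor
          · intro a; rw [truncStep_apply_inl, if_neg hx]
            by_cases ha : a = Sum.inr () <;> simp [ha]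
          · rw [Finset.sum_congr rfl
              (fun a _ => by rw [truncStep_apply_inl, if_neg hx])]
            simp
      · constructor
        · intro a; rw [truncStep_apply_inr]; exact (hσ.1 k (Sum.inr u)).1 a
        · rw [Finset.sum_congr rfl (fun a _ => by rw [truncStep_apply_inr])]
          exact (hσ.1 k (Sum.inr u)).2
    · rw [truncStep_apply_ne ρ T d μ η σ n k hk]; exact hσ.1 k s
  · intro k
    by_cases hk : k = n
    · subst hk; rw [truncStep_apply_inr]; exact hσ.2 k
    · rw [truncStep_apply_ne ρ T d μ η σ n k hk]; exact hσ.2 k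

/-- Iterated truncation of (the embedding of) an original policy. -/
noncomputable def truncIter (π : ∀ k, X k → A → ℝ) :
    ℕ → ∀ k, (X k ⊕ Unit) → (A ⊕ Unit) → ℝ
  | 0 => embed π
  | n + 1 => truncStep ρ T d μ η (truncIter π n) n

lemma isExtPolicy_truncIter (π : ∀ k, X k → A → ℝ) (hπ : IsPolicy π) (N : ℕ) :
    IsExtPolicy (truncIter ρ T d μ η π N) := by
  induction N with
  | zero => exact embed_isExtPolicy π hπ
  | succ N ih => exact isExtPolicy_truncStep ρ T d μ η _ N ih

lemma mem_trunc_isExtPolicy (N : ℕ) (σ : ∀ k, (X k ⊕ Unit) → (A ⊕ Unit) → ℝ)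
    (hσ : σ ∈ trunc d ρ T μ η N) : IsExtPolicy σ := by
  induction N generalizing σ with
  | zero => exact hσ
  | succ N ih =>
    obtain ⟨π', hπ', hne, hre, hnre, hinr⟩ := hσ
    have hπ'ext := ih π' hπ'
    classical
    constructor
    · intro k s
      by_cases hk : k = N
      · subst hk
        rcases s with x | u
        · by_cases hx : x ∈ reachSet d ρ T μ η (trunc d ρ T μ η k) k
          · rw [hre x hx]; exact hπ'ext.1 k (Sum.inl x)
          · constructor
            · intro a; rw [hnre x hx a]
              by_cases ha : a = Sum.inr () <;> simp [ha]
            · rw [Finset.sum_congr rfl (fun a _ => hnre x hx a)]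
              simp
        · cases u; rw [hinr]; exact hπ'ext.1 k (Sum.inr ())
      · rw [hne k hk]; exact hπ'ext.1 k s
    · intro k
      by_cases hk : k = N
      · subst hk; rw [hinr]; exact hπ'ext.2 k
      · rw [hne k hk]; exact hπ'ext.2 k

lemma truncIter_mem (π : ∀ k, X k → A → ℝ) (hπ : IsPolicy π) (N : ℕ) :
    truncIter ρ T d μ η π N ∈ trunc d ρ T μ η N := by
  induction N with
  | zero => exact embed_isExtPolicy π hπ
  | succ N ih =>
    refine ⟨truncIter ρ T d μ η π N, ih, ?_, ?_, ?_, ?_⟩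
    · intro m hm; exact truncStep_apply_ne ρ T d μ η _ N m hm
    · intro x hx; funext a
      rw [show truncIter ρ T d μ η π (N+1) = truncStep ρ T d μ η (truncIter ρ T d μ η π N) N
        from rfl, truncStep_apply_inl, if_pos hx]
    · intro x hx a
      rw [show truncIter ρ T d μ η π (N+1) = truncStep ρ T d μ η (truncIter ρ T d μ η π N) N
        from rfl, truncStep_apply_inl, if_neg hx]
    · funext a
      rw [show truncIter ρ T d μ η π (N+1) = truncStep ρ T d μ η (truncIter ρ T d μ η π N) N
        from rfl, truncStep_apply_inr]

/-- Pointwise bound for one-step propagation. -/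
lemma sumstep_pointwise (k : ℕ) (c : X k → ℝ) (hc : ∀ y, 0 ≤ c y)
    (q : X k → A → ℝ) (hq : ∀ y a, 0 ≤ q y a) (hq1 : ∀ y, ∑ a, q y a ≤ 1)
    (hTnn : ∀ (y : X k) (a : A) (z : X (k+1)), 0 ≤ T k y a z)
    (hTle : ∀ (y : X k) (a : A) (z : X (k+1)), T k y a z ≤ ‖μ (k+1) z‖)
    (z : X (k+1)) :
    ∑ y, ∑ a, c y * q y a * T k y a z ≤ ‖μ (k+1) z‖ * ∑ y, c y := by
  calc ∑ y, ∑ a, c y * q y a * T k y a z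
      ≤ ∑ y, ∑ a, c y * q y a * ‖μ (k+1) z‖ := by
        apply Finset.sum_le_sum; intro y _
        apply Finset.sum_le_sum; intro a _
        exact mul_le_mul_of_nonneg_left (hTle y a z) (mul_nonneg (hc y) (hq y a))
    _ = ∑ y, (c y * ∑ a, q y a) * ‖μ (k+1) z‖ := by
        apply Finset.sum_congr rfl; intro y _
        rw [mul_comm (c y) (∑ a, q y a), Finset.sum_mul, Finset.sum_mul]
        exact Finset.sum_congr rfl fun a _ => by ring

    _ ≤ ∑ y, (c y * 1) * ‖μ (k+1) z‖ := by
        apply Finset.sum_le_sum; intro y _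
        exact mul_le_mul_of_nonneg_right
          (mul_le_mul_of_nonneg_left (hq1 y) (hc y)) (norm_nonneg _)
    _ = ‖μ (k+1) z‖ * ∑ y, c y := by
        rw [Finset.mul_sum]
        exact Finset.sum_congr rfl fun y _ => by ring

/-- Mass bound for one-step propagation. -/
lemma sumstep_mass (k : ℕ) (c : X k → ℝ) (hc : ∀ y, 0 ≤ c y)
    (q : X k → A → ℝ) (hq : ∀ y a, 0 ≤ q y a) (hq1 : ∀ y, ∑ a, q y a ≤ 1)
    (hT1 : ∀ (y : X k) (a : A), ∑ z, T k y a z = 1) :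
    ∑ z, ∑ y, ∑ a, c y * q y a * T k y a z ≤ ∑ y, c y := by
  rw [Finset.sum_comm]
  calc ∑ y, ∑ z, ∑ a, c y * q y a * T k y a z
      = ∑ y, c y * ∑ a, q y a := by
        apply Finset.sum_congr rfl; intro y _
        rw [Finset.sum_comm, Finset.mul_sum]
        apply Finset.sum_congr rfl; intro a _
        rw [← Finset.mul_sum, hT1 y a, mul_one]
    _ ≤ ∑ y, c y * 1 := Finset.sum_le_sum fun y _ =>
        mul_le_mul_of_nonneg_left (hq1 y) (hc y)
    _ = ∑ y, c y := by simp

lemma notReach_occb_le (H : ℕ) (hρ : IsInit ρ)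
    (hT : ∀ k, k + 2 ≤ H → ∀ (x : X k) (a : A),
      (∀ x', 0 ≤ T k x a x') ∧ (∑ x', T k x a x' = 1))
    (m : ℕ) (hm : m + 2 ≤ H)
    (σ : ∀ k, (X k ⊕ Unit) → (A ⊕ Unit) → ℝ) (hσmem : σ ∈ trunc d ρ T μ η (m + 1))
    (y : X (m + 1))
    (hy : y ∉ reachSet d ρ T μ η (trunc d ρ T μ η (m + 1)) (m + 1)) :
    occb ρ T σ (m + 1) (Sum.inl y) ≤ η * ‖μ (m + 1) y‖ := by
  have hsup : occb ρ T σ (m + 1) (Sum.inl y) ≤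
      ⨆ π : trunc d ρ T μ η (m + 1), occb ρ T π.1 (m + 1) (Sum.inl y) := by
    refine le_ciSup (f := fun π : trunc d ρ T μ η (m + 1) =>
      occb ρ T π.1 (m + 1) (Sum.inl y)) ⟨1, ?_⟩ ⟨σ, hσmem⟩
    rintro r ⟨⟨τ, hτ⟩, rfl⟩
    exact occb_le_one ρ T H hρ hT τ (mem_trunc_isExtPolicy ρ T d μ η _ τ hτ) (m + 1)
      (by omega) y
  have hy' : ¬ (η * ‖muExt d μ (m + 1) (Sum.inl y)‖ ≤
      ⨆ π : trunc d ρ T μ η (m + 1), occb ρ T π.1 (m + 1) (Sum.inl y)) := by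
    intro hcon
    exact hy hcon
  rw [norm_muExt_inl] at hy'
  linarith [lt_of_not_ge hy']

lemma truncStep_deficit (H : ℕ) (hρ : IsInit ρ)
    (hT : ∀ k, k + 2 ≤ H → ∀ (x : X k) (a : A),
      (∀ x', 0 ≤ T k x a x') ∧ (∑ x', T k x a x' = 1))
    (φ : ∀ k, X k → A → EuclideanSpace ℝ (Fin d))
    (hlow : ∀ k, k + 2 ≤ H → ∀ (x : X k) (a : A) (x' : X (k + 1)),
      T k x a x' = ⟪μ (k + 1) x', φ k x a⟫)
    (hφn : ∀ k, k + 2 ≤ H → ∀ (x : X k) (a : A), ‖φ k x a‖ ≤ 1)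
    (hμn : ∀ k, k + 2 ≤ H → ∀ g : X (k + 1) → ℝ, (∀ x', g x' ∈ Set.Icc (0 : ℝ) 1) →
      ‖∑ x' : X (k + 1), g x' • μ (k + 1) x'‖ ≤ Real.sqrt d)
    (hη : 0 < η)
    (n h : ℕ) (hn : n < h) (hh : h + 1 ≤ H)
    (σ : ∀ k, (X k ⊕ Unit) → (A ⊕ Unit) → ℝ)
    (hσmem : σ ∈ trunc d ρ T μ η n) (hσ : IsExtPolicy σ) (x : X h) :
    occb ρ T σ h (Sum.inl x) ≤
      occb ρ T (truncStep ρ T d μ η σ n) h (Sum.inl x) +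
        2 * η * (d * Real.sqrt d) * ‖μ h x‖ := by
  classical
  have hdpos : (0:ℝ) ≤ 2 * η * (d * Real.sqrt d) * ‖μ h x‖ := by positivity
  have hσnn : ∀ k s a, 0 ≤ σ k s a := fun k s a => (hσ.1 k s).1 a
  have hTle : ∀ kk, kk + 2 ≤ H → ∀ (y : X kk) (a : A) (z : X (kk + 1)),
      T kk y a z ≤ ‖μ (kk + 1) z‖ := by
    intro kk hkk y a z
    rw [hlow kk hkk y a z]
    calc ⟪μ (kk + 1) z, φ kk y a⟫ ≤ ‖μ (kk + 1) z‖ * ‖φ kk y a‖ := real_inner_le_norm _ _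
      _ ≤ ‖μ (kk + 1) z‖ * 1 :=
          mul_le_mul_of_nonneg_left (hφn kk hkk y a) (norm_nonneg _)
      _ = ‖μ (kk + 1) z‖ := mul_one _
  set σ' := truncStep ρ T d μ η σ n with hσ'def
  rcases n with _ | m
  · -- n = 0 : nothing is truncated.
    have heq : occb ρ T σ h (Sum.inl x) = occb ρ T σ' h (Sum.inl x) := by
      apply occb_congr_below
      intro m hm y a
      by_cases h0 : m = 0
      · subst h0
        rw [hσ'def, truncStep_apply_inl, if_pos (by trivial)]
      · rw [hσ'def, truncStep_apply_ne ρ T d μ η σ 0 m h0]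
    linarith
  · -- n = m + 1
    have hm2H : m + 2 ≤ H := by omega
    set R := reachSet d ρ T μ η (trunc d ρ T μ η (m + 1)) (m + 1) with hRdef
    set c0 : X (m + 1) → ℝ :=
      fun y => if y ∈ R then 0 else occb ρ T σ (m + 1) (Sum.inl y) with hc0def
    have hc0nn : ∀ y, 0 ≤ c0 y := by
      intro y
      by_cases hy : y ∈ R
      · simp only [hc0def, if_pos hy]; exact le_rfl
      · simp only [hc0def, if_neg hy]
        exact occb_nonneg ρ T H hρ hT σ hσnn (m + 1) (by omega) y
    have hLle : ∑ y, c0 y ≤ η * (2 * d * Real.sqrt d) := by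
      calc ∑ y, c0 y ≤ ∑ y, η * ‖μ (m + 1) y‖ := by
            apply Finset.sum_le_sum
            intro y _
            by_cases hy : y ∈ R
            · simp only [hc0def, if_pos hy]; positivity
            · simp only [hc0def, if_neg hy]
              exact notReach_occb_le ρ T d μ η H hρ hT m hm2H σ hσmem y hy
        _ = η * ∑ y, ‖μ (m + 1) y‖ := (Finset.mul_sum _ _ _).symm
        _ ≤ η * (2 * d * Real.sqrt d) := by
            apply mul_le_mul_of_nonneg_left _ hη.le
            exact sum_norm_mu_le (H := H) μ hm2H hμn
    set e : ∀ k, X k → ℝ :=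
      fun k z => occb ρ T σ k (Sum.inl z) - occb ρ T σ' k (Sum.inl z) with hedef
    have hocc_eq_below : ∀ z : X (m + 1),
        occb ρ T σ' (m + 1) (Sum.inl z) = occb ρ T σ (m + 1) (Sum.inl z) := by
      intro z
      apply occb_congr_below
      intro m' hm' y' a'
      rw [hσ'def, truncStep_apply_ne ρ T d μ η σ (m + 1) m' (by omega)]
    have hbase : ∀ z : X (m + 2), e (m + 2) z =
        ∑ y, ∑ a, c0 y * σ (m + 1) (Sum.inl y) (Sum.inl a) * T (m + 1) y a z := by
      intro z
      simp only [hedef]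
      rw [occb_succ, occb_succ, ← Finset.sum_sub_distrib]
      refine Finset.sum_congr rfl fun y _ => ?_
      rw [← Finset.sum_sub_distrib]
      refine Finset.sum_congr rfl fun a _ => ?_
      rw [hocc_eq_below y]
      by_cases hy : y ∈ R
      · rw [hσ'def, truncStep_apply_inl, if_pos hy]
        simp only [hc0def, if_pos hy]
        ring
      · rw [hσ'def, truncStep_apply_inl, if_neg hy]
        simp only [hc0def, if_neg hy]
        have hzero : (if (Sum.inl a : A ⊕ Unit) = Sum.inr () then (1:ℝ) else 0) = 0 := by simp
        rw [hzero]
        ring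
    have hq1 : ∀ kk (y : X kk), ∑ a, σ kk (Sum.inl y) (Sum.inl a) ≤ 1 :=
      fun kk y => sum_actions_le_one σ hσ kk y
    have main : ∀ k, m + 2 ≤ k → k ≤ h →
        (∀ z : X k, 0 ≤ e k z) ∧ (∀ z : X k, e k z ≤ ‖μ k z‖ * ∑ y, c0 y) ∧
          (∑ z, e k z ≤ ∑ y, c0 y) := by
      intro k
      induction k with
      | zero => intro h1 _; omega
      | succ k ih =>
        intro hk1 hk2
        have hkH : k + 2 ≤ H := by omega
        by_cases hkm : k = m + 1
        · subst hkm
          refine ⟨?_, ?_, ?_⟩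
          · intro z
            rw [hbase z]
            apply Finset.sum_nonneg; intro y _
            apply Finset.sum_nonneg; intro a _
            exact mul_nonneg (mul_nonneg (hc0nn y) (hσnn _ _ _)) ((hT _ hkH y a).1 z)
          · intro z
            rw [hbase z]
            exact sumstep_pointwise T d μ (m + 1) c0 hc0nn _ (fun y a => hσnn _ _ _)
              (hq1 _) (fun y a z => (hT _ hkH y a).1 z) (hTle _ hkH) z
          · rw [Finset.sum_congr rfl fun z _ => hbase z]
            exact sumstep_mass T (m + 1) c0 hc0nn _ (fun y a => hσnn _ _ _)
              (hq1 _) (fun y a => (hT _ hkH y a).2)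
        · have hk1' : m + 2 ≤ k := by omega
          have hk2' : k ≤ h := by omega
          obtain ⟨ih0, ih1, ih2⟩ := ih hk1' hk2'
          have hrec : ∀ z : X (k + 1), e (k + 1) z =
              ∑ y, ∑ a, e k y * σ k (Sum.inl y) (Sum.inl a) * T k y a z := by
            intro z
            simp only [hedef]
            rw [occb_succ, occb_succ, ← Finset.sum_sub_distrib]
            refine Finset.sum_congr rfl fun y _ => ?_
            rw [← Finset.sum_sub_distrib]
            refine Finset.sum_congr rfl fun a _ => ?_
            have hσk : σ' k = σ k := by
              rw [hσ'def]; exact truncStep_apply_ne ρ T d μ η σ (m + 1) k hkm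
            rw [hσk]
            ring
          have heknn : ∀ y, 0 ≤ e k y := ih0
          refine ⟨?_, ?_, ?_⟩
          · intro z
            rw [hrec z]
            apply Finset.sum_nonneg; intro y _
            apply Finset.sum_nonneg; intro a _
            exact mul_nonneg (mul_nonneg (heknn y) (hσnn _ _ _)) ((hT _ hkH y a).1 z)
          · intro z
            rw [hrec z]
            calc ∑ y, ∑ a, e k y * σ k (Sum.inl y) (Sum.inl a) * T k y a z
                ≤ ‖μ (k + 1) z‖ * ∑ y, e k y :=
                  sumstep_pointwise T d μ k (e k) heknn _ (fun y a => hσnn _ _ _)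
                    (hq1 _) (fun y a z => (hT _ hkH y a).1 z) (hTle _ hkH) z
              _ ≤ ‖μ (k + 1) z‖ * ∑ y, c0 y :=
                  mul_le_mul_of_nonneg_left ih2 (norm_nonneg _)
          · calc ∑ z, e (k + 1) z
                = ∑ z, ∑ y, ∑ a, e k y * σ k (Sum.inl y) (Sum.inl a) * T k y a z :=
                  Finset.sum_congr rfl fun z _ => hrec z
              _ ≤ ∑ y, e k y := sumstep_mass T k (e k) heknn _ (fun y a => hσnn _ _ _)
                  (hq1 _) (fun y a => (hT _ hkH y a).2)
              _ ≤ ∑ y, c0 y := ih2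
    obtain ⟨-, hpt, -⟩ := main h (by omega) le_rfl
    have h1 := hpt x
    have h2 : ‖μ h x‖ * ∑ y, c0 y ≤ ‖μ h x‖ * (η * (2 * d * Real.sqrt d)) :=
      mul_le_mul_of_nonneg_left hLle (norm_nonneg _)
    have h3 : ‖μ h x‖ * (η * (2 * d * Real.sqrt d)) =
        2 * η * (d * Real.sqrt d) * ‖μ h x‖ := by ring
    have h4 : e h x = occb ρ T σ h (Sum.inl x) - occb ρ T σ' h (Sum.inl x) := by
      simp only [hedef]
    linarith

lemma truncIter_chain (H : ℕ) (hρ : IsInit ρ)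
    (hT : ∀ k, k + 2 ≤ H → ∀ (x : X k) (a : A),
      (∀ x', 0 ≤ T k x a x') ∧ (∑ x', T k x a x' = 1))
    (φ : ∀ k, X k → A → EuclideanSpace ℝ (Fin d))
    (hlow : ∀ k, k + 2 ≤ H → ∀ (x : X k) (a : A) (x' : X (k + 1)),
      T k x a x' = ⟪μ (k + 1) x', φ k x a⟫)
    (hφn : ∀ k, k + 2 ≤ H → ∀ (x : X k) (a : A), ‖φ k x a‖ ≤ 1)
    (hμn : ∀ k, k + 2 ≤ H → ∀ g : X (k + 1) → ℝ, (∀ x', g x' ∈ Set.Icc (0 : ℝ) 1) →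
      ‖∑ x' : X (k + 1), g x' • μ (k + 1) x'‖ ≤ Real.sqrt d)
    (hη : 0 < η) (h : ℕ) (hh : h + 1 ≤ H)
    (π : ∀ k, X k → A → ℝ) (hπ : IsPolicy π) (x : X h) (N : ℕ) :
    occ ρ T π h x ≤ occb ρ T (truncIter ρ T d μ η π N) h (Sum.inl x) +
      N * (2 * η * (d * Real.sqrt d) * ‖μ h x‖) := by
  induction N with
  | zero =>
    rw [embed_occ ρ T π h x]
    simp [truncIter]
  | succ N ih =>
    have hC : (0:ℝ) ≤ 2 * η * (d * Real.sqrt d) * ‖μ h x‖ := by positivity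
    by_cases hNh : N < h
    · have hdef := truncStep_deficit ρ T d μ η H hρ hT φ hlow hφn hμn hη N h hNh hh
        (truncIter ρ T d μ η π N) (truncIter_mem ρ T d μ η π hπ N)
        (isExtPolicy_truncIter ρ T d μ η π hπ N) x
      have heq : truncIter ρ T d μ η π (N + 1) =
          truncStep ρ T d μ η (truncIter ρ T d μ η π N) N := rfl
      rw [heq]
      push_cast
      linarith
    · have heq : occb ρ T (truncIter ρ T d μ η π (N + 1)) h (Sum.inl x) =
          occb ρ T (truncIter ρ T d μ η π N) h (Sum.inl x) := by
        apply occb_congr_below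
        intro m hm y a
        have hstep : truncIter ρ T d μ η π (N + 1) m = truncIter ρ T d μ η π N m :=
          truncStep_apply_ne ρ T d μ η _ N m (by omega)
        rw [hstep]
      rw [heq]
      push_cast
      linarith

end Aux

/-- (Transfer from the extended MDP back to the original MDP; the
paper's Lemma B.1.)  Fix a layer `h` (paper layer `h+1 ∈ {2, …, H}`, so `1 ≤ h` and
`h + 1 ≤ H`), `α ∈ (0,1)` and `η > 0` in a finite low-rank MDP of dimension `d` satisfying
the normalization assumptions.  If the finitely supported distribution `P` (weights `p`,
policies `πs` of the original MDP, embedded so that they never take the terminal action)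
is an `(α, η)`-randomized policy cover relative to the truncated class `Π̄_η` for layer `h`
in the extended MDP, then `P` is an `(α/2, 4 H d^{3/2} η)`-randomized policy cover for
layer `h` in the original MDP. -/
theorem stmt_13 (H d : ℕ) (hd : 1 ≤ d) (hH : 2 ≤ H)
    (h : ℕ) (hh1 : 1 ≤ h) (hh2 : h + 1 ≤ H)
    (α η : ℝ) (hα : α ∈ Set.Ioo (0 : ℝ) 1) (hη : 0 < η)
    (ρ : X 0 → ℝ) (hρ : IsInit ρ)
    (T : ∀ k, X k → A → X (k + 1) → ℝ)
    (hT : ∀ k, k + 2 ≤ H → ∀ (x : X k) (a : A),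
      (∀ x', 0 ≤ T k x a x') ∧ (∑ x', T k x a x' = 1))
    (φ : ∀ k, X k → A → EuclideanSpace ℝ (Fin d))
    (μ : ∀ k, X k → EuclideanSpace ℝ (Fin d))
    (hlow : ∀ k, k + 2 ≤ H → ∀ (x : X k) (a : A) (x' : X (k + 1)),
      T k x a x' = ⟪μ (k + 1) x', φ k x a⟫)
    (hφn : ∀ k, k + 2 ≤ H → ∀ (x : X k) (a : A), ‖φ k x a‖ ≤ 1)
    (hμn : ∀ k, k + 2 ≤ H → ∀ g : X (k + 1) → ℝ, (∀ x', g x' ∈ Set.Icc (0 : ℝ) 1) →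
      ‖∑ x' : X (k + 1), g x' • μ (k + 1) x'‖ ≤ Real.sqrt d)
    (n : ℕ) (p : Fin n → ℝ) (πs : Fin n → ∀ k, X k → A → ℝ)
    (hp : (∀ i, 0 ≤ p i) ∧ (∑ i, p i = 1)) (hπs : ∀ i, IsPolicy (πs i))
    (hcover : ∀ x : X h,
      η * ‖muExt d μ h (Sum.inl x)‖ ≤
          (⨆ π' : trunc d ρ T μ η H, occb ρ T π'.1 h (Sum.inl x)) →
        α * (⨆ π' : trunc d ρ T μ η H, occb ρ T π'.1 h (Sum.inl x)) ≤
          ∑ i, p i * occb ρ T (embed (πs i)) h (Sum.inl x)) :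
    ∀ x : X h,
      4 * H * (d : ℝ) ^ ((3 : ℝ) / 2) * η * ‖μ h x‖ ≤
          (⨆ π' : {π' : ∀ k, X k → A → ℝ // IsPolicy π'}, occ ρ T π'.1 h x) →
        α / 2 * (⨆ π' : {π' : ∀ k, X k → A → ℝ // IsPolicy π'}, occ ρ T π'.1 h x) ≤
          ∑ i, p i * occ ρ T (πs i) h x := by
  intro x hx
  obtain ⟨hp0, hp1⟩ := hp
  obtain ⟨hα0, hα1⟩ := hα
  have hn1 : 0 < n := by
    rcases Nat.eq_zero_or_pos n with h0 | h0
    · subst h0; simp at hp1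
    · exact h0
  have hd0 : (0:ℝ) < d := by exact_mod_cast hd
  have hd32 : (d:ℝ) ^ ((3:ℝ)/2) = d * Real.sqrt d := by
    rw [show (3:ℝ)/2 = 1 + 1/2 by norm_num, Real.rpow_add hd0, Real.rpow_one,
      ← Real.sqrt_eq_rpow]
  set C : ℝ := 2 * η * (d * Real.sqrt d) * ‖μ h x‖ with hC
  have hC0 : 0 ≤ C := by rw [hC]; positivity
  set Sb := ⨆ π' : trunc d ρ T μ η H, occb ρ T π'.1 h (Sum.inl x) with hSb
  set S := ⨆ π' : {π' : ∀ k, X k → A → ℝ // IsPolicy π'}, occ ρ T π'.1 h x with hS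
  have hBdd : BddAbove (Set.range fun π' : trunc d ρ T μ η H =>
      occb ρ T π'.1 h (Sum.inl x)) := by
    refine ⟨1, ?_⟩
    rintro r ⟨⟨τ, hτ⟩, rfl⟩
    exact occb_le_one ρ T H hρ hT τ (mem_trunc_isExtPolicy ρ T d μ η H τ hτ) h hh2 x
  have claim : ∀ π' : {π' : ∀ k, X k → A → ℝ // IsPolicy π'},
      occ ρ T π'.1 h x ≤ Sb + H * C := by
    rintro ⟨π', hπ'⟩
    have h1 := truncIter_chain ρ T d μ η H hρ hT φ hlow hφn hμn hη h hh2 π' hπ' x H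
    have h2 : occb ρ T (truncIter ρ T d μ η π' H) h (Sum.inl x) ≤ Sb := by
      rw [hSb]
      exact le_ciSup hBdd ⟨truncIter ρ T d μ η π' H, truncIter_mem ρ T d μ η π' hπ' H⟩
    rw [hC]
    simpa using h1.trans (by push_cast; linarith)
  have hSb0 : 0 ≤ Sb := by
    have hmem := truncIter_mem ρ T d μ η (πs ⟨0, hn1⟩) (hπs ⟨0, hn1⟩) H
    have h1 : 0 ≤ occb ρ T (truncIter ρ T d μ η (πs ⟨0, hn1⟩) H) h (Sum.inl x) :=
      occb_nonneg ρ T H hρ hT _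
        (fun k s a => ((isExtPolicy_truncIter ρ T d μ η _ (hπs ⟨0, hn1⟩) H).1 k s).1 a)
        h hh2 x
    refine h1.trans ?_
    rw [hSb]
    exact le_ciSup hBdd ⟨_, hmem⟩
  have hHC0 : (0:ℝ) ≤ (H:ℝ) * C := mul_nonneg (by positivity) hC0
  have hS_le : S ≤ Sb + H * C := by
    rw [hS]
    exact Real.iSup_le claim (by linarith)
  have h2HC : 2 * (H:ℝ) * C ≤ S := by
    rw [hd32] at hx
    have heq : 2 * (H:ℝ) * C = 4 * H * (d * Real.sqrt d) * η * ‖μ h x‖ := by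
      rw [hC]; ring
    linarith
  have hHC_le : (H:ℝ) * C ≤ S / 2 := by linarith
  have hSb_ge : S / 2 ≤ Sb := by linarith
  have hreach : η * ‖muExt d μ h (Sum.inl x)‖ ≤ Sb := by
    rw [norm_muExt_inl]
    have hs1 : (1:ℝ) ≤ Real.sqrt d := by
      rw [show (1:ℝ) = Real.sqrt 1 by simp]
      exact Real.sqrt_le_sqrt (by exact_mod_cast hd)
    have hH2 : (2:ℝ) ≤ (H:ℝ) := by exact_mod_cast hH
    have hd1 : (1:ℝ) ≤ (d:ℝ) := by exact_mod_cast hd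
    have hkey : η * ‖μ h x‖ ≤ (H:ℝ) * C := by
      rw [hC]
      have h1ds : (1:ℝ) ≤ (d:ℝ) * Real.sqrt d := by nlinarith
      have hfac : (1:ℝ) ≤ (H:ℝ) * (2 * (d * Real.sqrt d)) := by nlinarith [h1ds]
      nlinarith [mul_nonneg hη.le (norm_nonneg (μ h x))]
    linarith
  have hcov := hcover x hreach
  have hsum : ∑ i, p i * occb ρ T (embed (πs i)) h (Sum.inl x) =
      ∑ i, p i * occ ρ T (πs i) h x :=
    Finset.sum_congr rfl fun i _ => by rw [embed_occ]
  rw [hsum] at hcov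
  have h5 : α / 2 * S ≤ α / 2 * (2 * Sb) :=
    mul_le_mul_of_nonneg_left (by linarith) (by linarith)
  have h6 : α / 2 * (2 * Sb) = α * Sb := by ring
  linarith
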